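/- Let (V; f, g) be a dual-modular instance. Every locally maximin solution (p, q) induces a locally maximin allocation (f^p, g^q). Conversely, for every locally maximin allocation (x, y) ∈ B≥_f × B≤_g there exists a locally maximin solution (p, q) with (x, y) = (f^p, g^q). -/

import Mathlib

open Finset

variable {V : Type*} [Fintype V] [DecidableEq V]

/-- A set function is supermodular. -/
def Supermodular (f : Finset V → ℝ) : Prop :=
  ∀ A B : Finset V, f A + f B ≤ f (A ∩ B) + f (A ∪ B)

/-- A set function is submodular. -/
def Submodular (g : Finset V → ℝ) : Prop :=
  ∀ A B : Finset V, g (A ∩ B) + g (A ∪ B) ≤ g A + g B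

/-- A set function is monotone. -/
def MonotoneFn (f : Finset V → ℝ) : Prop :=
  ∀ A B : Finset V, A ⊆ B → f A ≤ f B

/-- A set function is strictly monotone. -/
def StrictMonoFn (g : Finset V → ℝ) : Prop :=
  ∀ A B : Finset V, A ⊂ B → g A < g B

/-- A dual-modular instance `(V; f, g)`: `f` is a nonnegative monotone supermodular
reward function, `g` is a nonnegative strictly monotone submodular cost function,
both vanishing on the empty set. -/
structure DualModular (f g : Finset V → ℝ) : Prop where
  f_nonneg : ∀ A, 0 ≤ f A
  g_nonneg : ∀ A, 0 ≤ g A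
  f_empty : f ∅ = 0
  g_empty : g ∅ = 0
  f_mono : MonotoneFn f
  g_strictMono : StrictMonoFn g
  f_supermodular : Supermodular f
  g_submodular : Submodular g

/-- Density of a subset. -/
noncomputable def density (f g : Finset V → ℝ) (S : Finset V) : ℝ := f S / g S

/-- Marginal contribution `h(S|A) = h(S ∪ A) - h(A)`. -/
def marginal (h : Finset V → ℝ) (S A : Finset V) : ℝ := h (S ∪ A) - h A

/-- Marginal density `ρ(S|A) = f(S|A)/g(S|A)`. -/
noncomputable def margDensity (f g : Finset V → ℝ) (S A : Finset V) : ℝ :=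
  marginal f S A / marginal g S A

/-- `S_{<i}`: the union of earlier parts in an indexed family. -/
def below {k : ℕ} (S : Fin k → Finset V) (i : Fin k) : Finset V :=
  (Finset.univ.filter (fun j => j < i)).biUnion S

/-- The density decomposition `V = S₁ ∪ … ∪ S_k`: each `S i` is a nonempty maximal
densest subset of the remaining instance with marginal functions. -/
structure IsDensityDecomposition (f g : Finset V → ℝ) {k : ℕ} (S : Fin k → Finset V) :
    Prop where
  nonempty : ∀ i, (S i).Nonempty
  disj : ∀ i, Disjoint (S i) (below S i)
  cover : Finset.univ.biUnion S = (Finset.univ : Finset V)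
  maxDensity : ∀ i, ∀ T : Finset V, T.Nonempty → Disjoint T (below S i) →
    margDensity f g T (below S i) ≤ margDensity f g (S i) (below S i)
  maximal : ∀ i, ∀ T : Finset V, T.Nonempty → Disjoint T (below S i) →
    margDensity f g (S i) (below S i) ≤ margDensity f g T (below S i) → T ⊆ S i

/-- `ρ_i`, the density of the `i`-th component of the decomposition. -/
noncomputable def decompDensity (f g : Finset V → ℝ) {k : ℕ} (S : Fin k → Finset V)
    (i : Fin k) : ℝ :=
  margDensity f g (S i) (below S i)

/-- Membership in the base contrapolymatroid `B≥_f`. -/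
def memBf (f : Finset V → ℝ) (x : V → ℝ) : Prop :=
  (∀ v, 0 ≤ x v) ∧ (∑ v, x v = f Finset.univ) ∧ ∀ A : Finset V, f A ≤ ∑ v ∈ A, x v

/-- Membership in the base polymatroid `B≤_g`. -/
def memBg (g : Finset V → ℝ) (y : V → ℝ) : Prop :=
  (∀ v, 0 ≤ y v) ∧ (∑ v, y v = g Finset.univ) ∧ ∀ A : Finset V, ∑ v ∈ A, y v ≤ g A

/-- An allocation is a pair `(x, y) ∈ B≥_f × B≤_g`. -/
def Allocation (f g : Finset V → ℝ) (x y : V → ℝ) : Prop := memBf f x ∧ memBg g y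

/-- The locally maximin condition for an allocation. -/
def LocallyMaximin (f g : Finset V → ℝ) (x y : V → ℝ) : Prop :=
  ∀ ρ : ℝ, 0 < ρ →
    (∑ v ∈ Finset.univ.filter (fun v => ρ ≤ x v / y v), x v
       = f (Finset.univ.filter (fun v => ρ ≤ x v / y v))) ∧
    (∑ v ∈ Finset.univ.filter (fun v => ρ ≤ x v / y v), y v
       = g (Finset.univ.filter (fun v => ρ ≤ x v / y v)))

/-- The multiset of induced densities, sorted in non-increasing order. -/
noncomputable def sortedDensities (x y : V → ℝ) : List ℝ :=
  ((Finset.univ.val.map (fun v => x v / y v)).sort (· ≤ ·)).reverse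

/-- An allocation is lexicographically optimal if its non-increasingly sorted density
vector is lexicographically minimal among all allocations. -/
def LexOptimal (f g : Finset V → ℝ) (x y : V → ℝ) : Prop :=
  Allocation f g x y ∧
  ∀ x' y' : V → ℝ, Allocation f g x' y' → sortedDensities x y ≤ sortedDensities x' y'

/-- The hockey-stick divergence `HS_γ(x ‖ y)`. -/
noncomputable def HS (γ : ℝ) (x y : V → ℝ) : ℝ := ∑ u, max (x u - γ * y u) 0

/-- The `θ`-divergence `D_θ(x ‖ y) = Σ_u y_u · θ(x_u / y_u)`. -/
noncomputable def Dtheta (θ : ℝ → ℝ) (x y : V → ℝ) : ℝ := ∑ u, y u * θ (x u / y u)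

/-- Permutations of `V`, encoded as bijections to positions `Fin |V|`;
`u ≺_σ v` iff `σ u < σ v`. -/
abbrev Perms (V : Type*) [Fintype V] := V ≃ Fin (Fintype.card V)

/-- `h^σ(u)`: the marginal contribution of `u` given the elements preceding it in `σ`. -/
def permVal (h : Finset V → ℝ) (σ : Perms V) (u : V) : ℝ :=
  h (insert u (Finset.univ.filter (fun w => σ w < σ u))) -
    h (Finset.univ.filter (fun w => σ w < σ u))

/-- A probability distribution on permutations of `V`. -/
def IsDist (p : Perms V → ℝ) : Prop := (∀ σ, 0 ≤ p σ) ∧ ∑ σ, p σ = 1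

/-- `h^p(u) = Σ_σ p_σ · h^σ(u)`. -/
noncomputable def distVal (h : Finset V → ℝ) (p : Perms V → ℝ) (u : V) : ℝ :=
  ∑ σ, p σ * permVal h σ u

/-- The density induced by a solution `(p, q)`. -/
noncomputable def solDensity (f g : Finset V → ℝ) (p q : Perms V → ℝ) (v : V) : ℝ :=
  distVal f p v / distVal g q v

/-- A solution `(p, q)` is locally maximin if whenever `u` has strictly larger induced
density than `v`, every permutation with positive weight puts `u` before `v`. -/
def LocallyMaximinSol (f g : Finset V → ℝ) (p q : Perms V → ℝ) : Prop :=
  ∀ u v : V, solDensity f g p q v < solDensity f g p q u →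
    ∀ σ : Perms V, (0 < p σ ∨ 0 < q σ) → σ u < σ v

/-- The convex-program objective `Φ_θ(p, q) = D_θ(f^p ‖ g^q)`. -/
noncomputable def Phi (θ : ℝ → ℝ) (f g : Finset V → ℝ) (p q : Perms V → ℝ) : ℝ :=
  Dtheta θ (distVal f p) (distVal g q)


section AuxLemmas

-- batch 1
lemma StrictMonoFn.toMono {g : Finset V → ℝ} (hg : StrictMonoFn g) : MonotoneFn g := by
  intro A B hAB
  rcases eq_or_ne A B with rfl | hne
  · exact le_refl _
  · exact (hg A B (ssubset_of_ne_of_subset hne hAB)).le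

lemma permVal_nonneg {h : Finset V → ℝ} (hm : MonotoneFn h) (σ : Perms V) (u : V) :
    0 ≤ permVal h σ u :=
  sub_nonneg.2 <| hm _ _ (subset_insert _ _)

lemma permVal_neg (h : Finset V → ℝ) (σ : Perms V) (u : V) :
    permVal (fun A => -(h A)) σ u = -(permVal h σ u) := by
  simp [permVal]; ring

lemma sum_permVal_initial (h : Finset V → ℝ) (h0 : h ∅ = 0) (σ : Perms V) (S : Finset V)
    (hS : ∀ u ∈ S, ∀ v, v ∉ S → σ u < σ v) :
    ∑ v ∈ S, permVal h σ v = h S := by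
  suffices H : ∀ (m : ℕ) (S : Finset V), S.card = m →
      (∀ u ∈ S, ∀ v, v ∉ S → σ u < σ v) → ∑ v ∈ S, permVal h σ v = h S from H _ S rfl hS
  clear hS S
  intro m
  induction m with
  | zero =>
    intro S hn _
    rw [Finset.card_eq_zero] at hn; subst hn; simp [h0]
  | succ m ih =>
    intro S hn hS
    have hne : S.Nonempty := Finset.card_pos.1 (by omega)
    obtain ⟨u, huS, hmax⟩ := Finset.exists_max_image S (fun v => σ v) hne
    have hfil : Finset.univ.filter (fun w => σ w < σ u) = S.erase u := by
      ext w
      simp only [Finset.mem_filter, Finset.mem_univ, true_and, Finset.mem_erase]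
      constructor
      · intro hw
        by_cases hwS : w ∈ S
        · exact ⟨fun he => absurd (he ▸ hw) (lt_irrefl _), hwS⟩
        · exact absurd (hS u huS w hwS) (not_lt.2 hw.le)
      · rintro ⟨hne', hwS⟩
        exact lt_of_le_of_ne (hmax w hwS) (fun he => hne' (σ.injective he))
    have hins : insert u (S.erase u) = S := Finset.insert_erase huS
    have hval : permVal h σ u = h S - h (S.erase u) := by
      rw [permVal, hfil, hins]
    rw [← Finset.add_sum_erase S _ huS, hval,
      ih (S.erase u) (by rw [Finset.card_erase_of_mem huS, hn]; rfl) ?_]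
    · ring
    · intro u' hu' v hv
      by_cases hvu : v = u
      · subst hvu
        exact lt_of_le_of_ne (hmax u' (Finset.mem_of_mem_erase hu'))
          (fun he => (Finset.mem_erase.1 hu').1 (σ.injective he))
      · exact hS u' (Finset.mem_of_mem_erase hu') v (fun hvS => hv (Finset.mem_erase.2 ⟨hvu, hvS⟩))

lemma le_sum_permVal_of_supermodular {f : Finset V → ℝ} (h0 : f ∅ = 0) (hsm : Supermodular f)
    (σ : Perms V) (A : Finset V) : f A ≤ ∑ v ∈ A, permVal f σ v := by
  suffices H : ∀ (m : ℕ) (A : Finset V), A.card = m → f A ≤ ∑ v ∈ A, permVal f σ v from H _ A rfl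
  clear A
  intro m
  induction m with
  | zero =>
    intro A hn
    rw [Finset.card_eq_zero] at hn; subst hn; simp [h0]
  | succ m ih =>
    intro A hn
    have hne : A.Nonempty := Finset.card_pos.1 (by omega)
    obtain ⟨u, huA, hmax⟩ := Finset.exists_max_image A (fun v => σ v) hne
    set P := Finset.univ.filter (fun w => σ w < σ u) with hP
    have hsub : A.erase u ⊆ P := by
      intro w hw
      rw [hP, Finset.mem_filter]
      exact ⟨Finset.mem_univ _, lt_of_le_of_ne (hmax w (Finset.mem_of_mem_erase hw))
        (fun he => (Finset.mem_erase.1 hw).1 (σ.injective he))⟩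
    have hiP : A ∩ P = A.erase u := by
      apply Finset.Subset.antisymm
      · intro w hw
        rw [Finset.mem_inter, hP, Finset.mem_filter] at hw
        exact Finset.mem_erase.2 ⟨fun he => absurd (he ▸ hw.2.2) (lt_irrefl _), hw.1⟩
      · exact Finset.subset_inter (Finset.erase_subset _ _) hsub
    have huP : A ∪ P = insert u P := by
      apply Finset.Subset.antisymm
      · intro w hw
        rcases Finset.mem_union.1 hw with hw | hw
        · rcases eq_or_ne w u with rfl | hne'
          · exact Finset.mem_insert_self _ _
          · exact Finset.mem_insert_of_mem (hsub (Finset.mem_erase.2 ⟨hne', hw⟩))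
        · exact Finset.mem_insert_of_mem hw
      · exact Finset.insert_subset (Finset.mem_union_left _ huA) (Finset.subset_union_right)
    have hkey : f A ≤ f (A.erase u) + permVal f σ u := by
      have := hsm A P
      rw [hiP, huP] at this
      rw [permVal, ← hP]
      linarith
    calc f A ≤ f (A.erase u) + permVal f σ u := hkey
      _ ≤ (∑ v ∈ A.erase u, permVal f σ v) + permVal f σ u := by
          have := ih (A.erase u) (by rw [Finset.card_erase_of_mem huA, hn]; rfl)
          linarith
      _ = ∑ v ∈ A, permVal f σ v := by
          rw [← Finset.add_sum_erase A _ huA]; ring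

lemma sum_permVal_le_of_submodular {g : Finset V → ℝ} (h0 : g ∅ = 0) (hsm : Submodular g)
    (σ : Perms V) (A : Finset V) : ∑ v ∈ A, permVal g σ v ≤ g A := by
  have hsup : Supermodular (fun A => -(g A)) := fun A B => by
    have := hsm A B; simp only; linarith
  have := le_sum_permVal_of_supermodular (f := fun A => -(g A)) (by simp [h0]) hsup σ A
  simp only [permVal_neg, Finset.sum_neg_distrib] at this
  linarith

-- batch 2
lemma sum_permVal_univ (h : Finset V → ℝ) (h0 : h ∅ = 0) (σ : Perms V) :
    ∑ v, permVal h σ v = h Finset.univ :=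
  sum_permVal_initial h h0 σ Finset.univ (fun _ _ v hv => absurd (Finset.mem_univ v) hv)

lemma memBf_distVal {f : Finset V → ℝ} (h0 : f ∅ = 0)
    (hmono : MonotoneFn f)
    (hsm : Supermodular f)
    {p : Perms V → ℝ} (hp : IsDist p) : memBf f (distVal f p) := by
  refine ⟨fun v => ?_, ?_, fun A => ?_⟩
  · exact Finset.sum_nonneg fun σ _ =>
      mul_nonneg (hp.1 σ) (permVal_nonneg hmono σ v)
  · calc ∑ v, distVal f p v = ∑ σ, ∑ v, p σ * permVal f σ v := Finset.sum_comm
      _ = ∑ σ, p σ * f Finset.univ := by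
          refine Finset.sum_congr rfl fun σ _ => ?_
          rw [← Finset.mul_sum, sum_permVal_univ f h0 σ]
      _ = f Finset.univ := by rw [← Finset.sum_mul, hp.2, one_mul]
  · calc f A = ∑ σ, p σ * f A := by rw [← Finset.sum_mul, hp.2, one_mul]
      _ ≤ ∑ σ, p σ * ∑ v ∈ A, permVal f σ v := Finset.sum_le_sum fun σ _ =>
          mul_le_mul_of_nonneg_left (le_sum_permVal_of_supermodular h0 hsm σ A) (hp.1 σ)
      _ = ∑ v ∈ A, distVal f p v := by
          simp_rw [Finset.mul_sum]
          exact Finset.sum_comm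

lemma memBg_distVal {g : Finset V → ℝ} (h0 : g ∅ = 0)
    (hmono : MonotoneFn g)
    (hsm : Submodular g)
    {q : Perms V → ℝ} (hq : IsDist q) : memBg g (distVal g q) := by
  refine ⟨fun v => ?_, ?_, fun A => ?_⟩
  · exact Finset.sum_nonneg fun σ _ =>
      mul_nonneg (hq.1 σ) (permVal_nonneg hmono σ v)
  · calc ∑ v, distVal g q v = ∑ σ, ∑ v, q σ * permVal g σ v := Finset.sum_comm
      _ = ∑ σ, q σ * g Finset.univ := by
          refine Finset.sum_congr rfl fun σ _ => ?_
          rw [← Finset.mul_sum, sum_permVal_univ g h0 σ]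
      _ = g Finset.univ := by rw [← Finset.sum_mul, hq.2, one_mul]
  · calc ∑ v ∈ A, distVal g q v = ∑ σ, q σ * ∑ v ∈ A, permVal g σ v := by
          simp_rw [Finset.mul_sum]
          exact Finset.sum_comm
      _ ≤ ∑ σ, q σ * g A := Finset.sum_le_sum fun σ _ =>
          mul_le_mul_of_nonneg_left (sum_permVal_le_of_submodular h0 hsm σ A) (hq.1 σ)
      _ = g A := by rw [← Finset.sum_mul, hq.2, one_mul]

lemma dist_sum_support {p : Perms V → ℝ} (hp : IsDist p) (c : Perms V → ℝ) (C : ℝ)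
    (hc : ∀ σ, p σ ≠ 0 → c σ = C) : ∑ σ, p σ * c σ = C := by
  have : ∀ σ ∈ Finset.univ, p σ * c σ = p σ * C := by
    intro σ _
    by_cases h : p σ = 0
    · rw [h, zero_mul, zero_mul]
    · rw [hc σ h]
  rw [Finset.sum_congr rfl this, ← Finset.sum_mul, hp.2, one_mul]

lemma sum_distVal_initial (h : Finset V → ℝ) (h0 : h ∅ = 0) {p : Perms V → ℝ} (hp : IsDist p)
    (S : Finset V) (hS : ∀ σ, p σ ≠ 0 → ∀ u ∈ S, ∀ v, v ∉ S → σ u < σ v) :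
    ∑ v ∈ S, distVal h p v = h S := by
  calc ∑ v ∈ S, distVal h p v = ∑ σ, p σ * ∑ v ∈ S, permVal h σ v := by
        simp_rw [Finset.mul_sum]
        exact Finset.sum_comm
    _ = h S := dist_sum_support hp _ _ fun σ hσ => sum_permVal_initial h h0 σ S (hS σ hσ)


lemma greedy_le (h : Finset V → ℝ) (z d w : V → ℝ) (h0 : h ∅ = 0)
    (hub : ∀ A : Finset V, h A ≤ ∑ v ∈ A, z v)
    (htot : ∑ v, z v = h Finset.univ)
    (hd0 : ∀ v, 0 ≤ d v)
    (htight : ∀ v0, 0 < d v0 →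
      ∑ v ∈ Finset.univ.filter (fun v => d v0 ≤ d v), z v
        = h (Finset.univ.filter (fun v => d v0 ≤ d v)))
    (σ : Perms V)
    (hσ1 : ∀ u v, d v < d u → σ u < σ v)
    (hσ2 : ∀ u v, d u = d v → w v < w u → σ u < σ v) :
    ∑ v, w v * permVal h σ v ≤ ∑ v, w v * z v := by
  set n := Fintype.card V with hn
  set P : ℕ → Finset V := fun m => Finset.univ.filter (fun v => (σ v : ℕ) < m) with hPdef
  set D : ℕ → ℝ := fun m => (∑ v ∈ P m, z v) - h (P m) with hDdef
  set a : ℕ → ℝ := fun i => if hi : i < n then w (σ.symm ⟨i, hi⟩) else 0 with hadef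
  -- basic facts about P
  have hP0 : P 0 = ∅ := by simp [hPdef]
  have hPn : P n = Finset.univ := by
    ext v; simp [hPdef, (σ v).isLt]; exact (σ v).isLt
  have hD0 : D 0 = 0 := by simp [hDdef, hP0, h0]
  have hDn : D n = 0 := by simp [hDdef, hPn, htot]
  have hDnonneg : ∀ m, 0 ≤ D m := fun m => sub_nonneg.2 (hub (P m))
  -- the step identity
  have hstep : ∀ j : Fin n, D ((j : ℕ) + 1) - D j
      = z (σ.symm j) - permVal h σ (σ.symm j) := by
    intro j
    set u := σ.symm j with hu
    have hσu : σ u = j := σ.apply_symm_apply j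
    have hfil : Finset.univ.filter (fun w => σ w < σ u) = P (j : ℕ) := by
      ext v
      simp only [hPdef, Finset.mem_filter, Finset.mem_univ, true_and, Fin.lt_def, hσu]
    have huP : u ∉ P (j : ℕ) := by
      simp [hPdef, hσu]
    have hPins : P ((j : ℕ) + 1) = insert u (P (j : ℕ)) := by
      ext v
      simp only [hPdef, Finset.mem_filter, Finset.mem_univ, true_and, Finset.mem_insert]
      constructor
      · intro hv
        rcases Nat.lt_succ_iff_lt_or_eq.1 hv with hv | hv
        · exact Or.inr (by simpa [hPdef] using hv)
        · left
          have : σ v = j := Fin.ext hv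
          rw [hu, ← this, Equiv.symm_apply_apply]
      · rintro (rfl | hv)
        · rw [hσu]; exact Nat.lt_succ_self _
        · exact Nat.lt_succ_of_lt (by simpa [hPdef] using hv)
    have hsum : ∑ v ∈ P ((j : ℕ) + 1), z v = z u + ∑ v ∈ P (j : ℕ), z v := by
      rw [hPins, Finset.sum_insert huP]
    have hperm : permVal h σ u = h (P ((j : ℕ) + 1)) - h (P (j : ℕ)) := by
      rw [permVal, hfil, hPins]
    simp only [hDdef, hsum, hperm]
    ring
  -- rewrite the goal as a sum over range n
  have hmain : ∑ v, w v * (z v - permVal h σ v)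
      = ∑ i ∈ Finset.range n, a i * (D (i + 1) - D i) := by
    rw [← Fin.sum_univ_eq_sum_range (fun i => a i * (D (i + 1) - D i)) n]
    rw [← Equiv.sum_comp σ (fun j : Fin n => a (j : ℕ) * (D ((j : ℕ) + 1) - D (j : ℕ)))]
    refine Finset.sum_congr rfl fun v _ => ?_
    have h1 : a ((σ v : ℕ)) = w v := by
      simp only [hadef]
      rw [dif_pos (σ v).isLt]
      have he : (⟨(σ v : ℕ), (σ v).isLt⟩ : Fin n) = σ v := Fin.eta _ _
      rw [he, Equiv.symm_apply_apply]
    have h2 := hstep (σ v)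
    rw [Equiv.symm_apply_apply] at h2
    rw [h1, h2]
  -- Abel summation
  have habel : ∑ i ∈ Finset.range n, a i * (D (i + 1) - D i)
      = ∑ i ∈ Finset.range (n - 1), (a i - a (i + 1)) * D (i + 1) := by
    have hby := Finset.sum_range_by_parts a (fun i => D (i + 1) - D i) n
    have hG : ∀ m : ℕ, ∑ i ∈ Finset.range m, (D (i + 1) - D i) = D m := by
      intro m
      rw [Finset.sum_range_sub D m, hD0, sub_zero]
    simp only [smul_eq_mul] at hby
    rw [hby, hG, hDn, mul_zero, zero_sub]
    rw [← Finset.sum_neg_distrib]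
    refine Finset.sum_congr rfl fun i _ => ?_
    rw [hG]
    ring
  -- each term is nonnegative
  have hterm : ∀ i ∈ Finset.range (n - 1), 0 ≤ (a i - a (i + 1)) * D (i + 1) := by
    intro i hi
    rw [Finset.mem_range] at hi
    have hi1 : i < n := by omega
    have hi2 : i + 1 < n := by omega
    rcases le_or_gt (a (i + 1)) (a i) with hle | hlt
    · exact mul_nonneg (by linarith) (hDnonneg _)
    · -- a i < a (i+1) : boundary case, D (i+1) = 0
      set u := σ.symm ⟨i, hi1⟩ with hu
      set u' := σ.symm ⟨i + 1, hi2⟩ with hu'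
      have hσu : (σ u : ℕ) = i := by rw [hu, Equiv.apply_symm_apply]
      have hσu' : (σ u' : ℕ) = i + 1 := by rw [hu', Equiv.apply_symm_apply]
      have haw : a i = w u := by rw [hadef]; simp only; rw [dif_pos hi1]
      have haw' : a (i + 1) = w u' := by rw [hadef]; simp only; rw [dif_pos hi2]
      rw [haw, haw'] at hlt
      -- show d u' < d u
      have hns : ¬ σ u' < σ u := by
        rw [Fin.lt_def, hσu, hσu']
        omega
      have hdlt : d u' < d u := by
        rcases lt_trichotomy (d u') (d u) with h' | h' | h'
        · exact h'
        · exact absurd (hσ2 u' u h' hlt) hns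
        · exact absurd (hσ1 u' u h') hns
      have hdpos : 0 < d u := lt_of_le_of_lt (hd0 u') hdlt
      have hPeq : P (i + 1) = Finset.univ.filter (fun v => d u ≤ d v) := by
        ext v
        simp only [hPdef, Finset.mem_filter, Finset.mem_univ, true_and]
        constructor
        · intro hv
          by_contra hcon
          push_neg at hcon
          have := hσ1 u v hcon
          rw [Fin.lt_def, hσu] at this
          omega
        · intro hv
          by_contra hcon
          push_neg at hcon
          have := hσ1 v u' (lt_of_lt_of_le hdlt hv)
          rw [Fin.lt_def, hσu'] at this
          omega
      have : D (i + 1) = 0 := by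
        rw [hDdef]
        simp only
        rw [hPeq, htight u hdpos, sub_self]
      rw [this, mul_zero]
  have : 0 ≤ ∑ v, w v * (z v - permVal h σ v) := by
    rw [hmain, habel]
    exact Finset.sum_nonneg hterm
  simp only [mul_sub] at this
  rw [Finset.sum_sub_distrib] at this
  linarith

lemma exists_perm_of_key {K : Type*} [LinearOrder K] (key : V → K)
    (hinj : Function.Injective key) :
    ∃ σ : Perms V, ∀ u v : V, key u < key v → σ u < σ v := by
  classical
  let r : V → V → Prop := fun u v => key u ≤ key v
  haveI : DecidableRel r := fun u v => inferInstanceAs (Decidable (key u ≤ key v))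
  haveI : IsTrans V r := ⟨fun _ _ _ h1 h2 => le_trans h1 h2⟩
  haveI : IsAntisymm V r := ⟨fun _ _ h1 h2 => hinj (le_antisymm h1 h2)⟩
  haveI : IsTotal V r := ⟨fun a b => le_total (key a) (key b)⟩
  set l := Finset.univ.sort r with hl
  have hnd : l.Nodup := Finset.sort_nodup (s := Finset.univ) (r := r)
  have hmem : ∀ v : V, v ∈ l := fun v => (Finset.mem_sort r).2 (Finset.mem_univ v)
  have hlen : l.length = Fintype.card V := by
    rw [hl, Finset.length_sort, Finset.card_univ]
  have hsorted : l.Pairwise r := Finset.pairwise_sort (s := Finset.univ) (r := r)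
  let e : Fin l.length ≃ V := hnd.getEquivOfForallMemList l hmem
  refine ⟨(e.symm).trans (finCongr hlen), fun u v huv => ?_⟩
  by_contra hcon
  push_neg at hcon
  have hne : u ≠ v := fun he => absurd (he ▸ huv) (lt_irrefl _)
  have hlt : (finCongr hlen) (e.symm v) < (finCongr hlen) (e.symm u) := by
    rcases lt_or_eq_of_le hcon with hlt | heq
    · exact hlt
    · exact absurd (e.symm.injective ((finCongr hlen).injective heq.symm)) hne
  have hlt' : e.symm v < e.symm u := by
    rw [Fin.lt_def] at hlt ⊢
    exact hlt
  have := hsorted.rel_get_of_lt hlt'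
  have hgetv : l.get (e.symm v) = v := e.apply_symm_apply v
  have hgetu : l.get (e.symm u) = u := e.apply_symm_apply u
  rw [hgetv, hgetu] at this
  exact absurd huv (not_lt.2 this)

lemma exists_perm_dw (d w : V → ℝ) :
    ∃ σ : Perms V, (∀ u v, d v < d u → σ u < σ v) ∧
      (∀ u v, d u = d v → w v < w u → σ u < σ v) := by
  classical
  let e0 := Fintype.equivFin V
  let key : V → ℝ ×ₗ (ℝ ×ₗ Fin (Fintype.card V)) :=
    fun v => toLex (-(d v), toLex (-(w v), e0 v))
  have hinj : Function.Injective key := by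
    intro u v huv
    have h1 : (-(d u), toLex (-(w u), e0 u)) = (-(d v), toLex (-(w v), e0 v)) :=
      toLex.injective huv
    have h2 : toLex ((-(w u) : ℝ), e0 u) = toLex (-(w v), e0 v) := (Prod.ext_iff.1 h1).2
    have h3 : ((-(w u) : ℝ), e0 u) = (-(w v), e0 v) := toLex.injective h2
    exact e0.injective (Prod.ext_iff.1 h3).2
  obtain ⟨σ, hσ⟩ := exists_perm_of_key key hinj
  refine ⟨σ, fun u v hd => hσ u v ?_, fun u v hd hw => hσ u v ?_⟩
  · exact Prod.Lex.lt_iff.2 (Or.inl (by simpa [key] using hd))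
  · refine Prod.Lex.lt_iff.2 (Or.inr ⟨by simp [key, hd], ?_⟩)
    exact Prod.Lex.lt_iff.2 (Or.inl (by simpa [key] using hw))

lemma exists_dist_of_mem_hull (Sg : Finset (Perms V)) (F : Perms V → (V → ℝ)) (x : V → ℝ)
    (hx : x ∈ convexHull ℝ (↑(Sg.image F) : Set (V → ℝ))) :
    ∃ p : Perms V → ℝ, IsDist p ∧ (∀ σ, p σ ≠ 0 → σ ∈ Sg) ∧
      (∀ u, ∑ σ, p σ * F σ u = x u) := by
  classical
  obtain ⟨wt, hwt0, hwt1, hwtx⟩ := Finset.mem_convexHull'.1 hx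
  set rep : (V → ℝ) → Perms V := fun z =>
    if hz : ∃ σ ∈ Sg, F σ = z then hz.choose else Fintype.equivFin V with hrep
  have hrep_mem : ∀ z ∈ Sg.image F, rep z ∈ Sg := by
    intro z hz
    obtain ⟨σ, hσ, hFσ⟩ := Finset.mem_image.1 hz
    have hex : ∃ σ ∈ Sg, F σ = z := ⟨σ, hσ, hFσ⟩
    rw [hrep]
    simp only [dif_pos hex]
    exact hex.choose_spec.1
  have hrep_val : ∀ z ∈ Sg.image F, F (rep z) = z := by
    intro z hz
    obtain ⟨σ, hσ, hFσ⟩ := Finset.mem_image.1 hz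
    have hex : ∃ σ ∈ Sg, F σ = z := ⟨σ, hσ, hFσ⟩
    rw [hrep]
    simp only [dif_pos hex]
    exact hex.choose_spec.2
  refine ⟨fun σ => ∑ z ∈ Sg.image F, if rep z = σ then wt z else 0, ⟨fun σ => ?_, ?_⟩, ?_, ?_⟩
  · exact Finset.sum_nonneg fun z hz => by
      split
      · exact hwt0 z hz
      · exact le_refl 0
  · rw [Finset.sum_comm]
    rw [← hwt1]
    refine Finset.sum_congr rfl fun z hz => ?_
    rw [Finset.sum_ite_eq Finset.univ (rep z) (fun _ => wt z), if_pos (Finset.mem_univ _)]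
  · intro σ hσ
    obtain ⟨z, hz, hne⟩ : ∃ z ∈ Sg.image F, (if rep z = σ then wt z else 0) ≠ 0 := by
      by_contra hcon
      push_neg at hcon
      exact hσ (Finset.sum_eq_zero hcon)
    have : rep z = σ := by
      by_contra hc
      rw [if_neg hc] at hne
      exact hne rfl
    exact this ▸ hrep_mem z hz
  · intro u
    have : ∀ σ, (∑ z ∈ Sg.image F, if rep z = σ then wt z else 0) * F σ u
        = ∑ z ∈ Sg.image F, (if rep z = σ then wt z * F σ u else 0) := by
      intro σ
      rw [Finset.sum_mul]
      refine Finset.sum_congr rfl fun z hz => ?_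
      split <;> simp
    simp_rw [this]
    rw [Finset.sum_comm]
    have : ∀ z ∈ Sg.image F, (∑ σ, if rep z = σ then wt z * F σ u else 0) = wt z * z u := by
      intro z hz
      rw [Finset.sum_ite_eq Finset.univ (rep z) (fun σ => wt z * F σ u),
        if_pos (Finset.mem_univ _), hrep_val z hz]
    rw [Finset.sum_congr rfl this]
    have := congrFun hwtx u
    rw [Finset.sum_apply] at this
    simpa using this

lemma mem_hull_of_tight (h : Finset V → ℝ) (z d : V → ℝ) (h0 : h ∅ = 0)
    (hub : ∀ A : Finset V, h A ≤ ∑ v ∈ A, z v)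
    (htot : ∑ v, z v = h Finset.univ)
    (hd0 : ∀ v, 0 ≤ d v)
    (htight : ∀ v0, 0 < d v0 →
      ∑ v ∈ Finset.univ.filter (fun v => d v0 ≤ d v), z v
        = h (Finset.univ.filter (fun v => d v0 ≤ d v))) :
    ∃ p : Perms V → ℝ, IsDist p ∧
      (∀ σ, p σ ≠ 0 → ∀ u v, d v < d u → σ u < σ v) ∧
      (∀ u, ∑ σ, p σ * permVal h σ u = z u) := by
  classical
  set Sg : Finset (Perms V) :=
    Finset.univ.filter (fun σ => ∀ u v, d v < d u → σ u < σ v) with hSg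
  set F : Perms V → (V → ℝ) := fun σ u => permVal h σ u with hF
  have hmem : z ∈ convexHull ℝ (↑(Sg.image F) : Set (V → ℝ)) := by
    by_contra hz
    obtain ⟨φ, u0, hφx, hφb⟩ := geometric_hahn_banach_point_closed
      (convex_convexHull ℝ _) ((Sg.image F).finite_toSet.isClosed_convexHull (𝕜 := ℝ)) hz
    set w : V → ℝ := fun v => φ (fun j => if v = j then (1 : ℝ) else 0) with hw
    have hφ_eq : ∀ ζ : V → ℝ, φ ζ = ∑ v, ζ v * w v := by
      intro ζ
      conv_lhs => rw [pi_eq_sum_univ ζ]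
      rw [map_sum]
      refine Finset.sum_congr rfl fun v _ => ?_
      rw [map_smul, smul_eq_mul, hw]
    obtain ⟨σ, hσ1, hσ2⟩ := exists_perm_dw d w
    have hsigSg : σ ∈ Sg := by
      rw [hSg, Finset.mem_filter]
      exact ⟨Finset.mem_univ _, hσ1⟩
    have hge := greedy_le h z d w h0 hub htot hd0 htight σ hσ1 hσ2
    have hFσ : φ (F σ) ≤ φ z := by
      rw [hφ_eq, hφ_eq]
      calc ∑ v, F σ v * w v = ∑ v, w v * permVal h σ v := by
            refine Finset.sum_congr rfl fun v _ => ?_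
            rw [hF, mul_comm]
        _ ≤ ∑ v, w v * z v := hge
        _ = ∑ v, z v * w v := by
            refine Finset.sum_congr rfl fun v _ => mul_comm _ _
    have hin : F σ ∈ convexHull ℝ (↑(Sg.image F) : Set (V → ℝ)) :=
      subset_convexHull ℝ _ (Finset.mem_coe.2 (Finset.mem_image_of_mem F hsigSg))
    have := hφb _ hin
    linarith
  obtain ⟨p, hp, hsupp, hval⟩ := exists_dist_of_mem_hull Sg F z hmem
  refine ⟨p, hp, fun σ hσ => ?_, hval⟩
  have := hsupp σ hσ
  rw [hSg, Finset.mem_filter] at this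
  exact this.2

end AuxLemmas

/-- Fact 2.7: locally maximin solutions induce locally maximin
allocations, and every locally maximin allocation is induced by some locally maximin
solution. -/
theorem locally_maximin_two_representations (f g : Finset V → ℝ)
    (hdm : DualModular f g) :
    (∀ p q : Perms V → ℝ, IsDist p → IsDist q → LocallyMaximinSol f g p q →
      Allocation f g (distVal f p) (distVal g q) ∧
        LocallyMaximin f g (distVal f p) (distVal g q)) ∧
    (∀ x y : V → ℝ, Allocation f g x y → LocallyMaximin f g x y →
      ∃ p q : Perms V → ℝ, IsDist p ∧ IsDist q ∧ LocallyMaximinSol f g p q ∧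
        distVal f p = x ∧ distVal g q = y) := by
  classical
  constructor
  · -- Direction 1: locally maximin solutions induce locally maximin allocations
    intro p q hp hq hlmsol
    have halloc : Allocation f g (distVal f p) (distVal g q) :=
      ⟨memBf_distVal hdm.f_empty hdm.f_mono hdm.f_supermodular hp,
       memBg_distVal hdm.g_empty hdm.g_strictMono.toMono hdm.g_submodular hq⟩
    refine ⟨halloc, fun ρ hρ => ?_⟩
    set S := Finset.univ.filter (fun v => ρ ≤ distVal f p v / distVal g q v) with hS
    have hordered : ∀ σ : Perms V, (0 < p σ ∨ 0 < q σ) →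
        ∀ u ∈ S, ∀ v, v ∉ S → σ u < σ v := by
      intro σ hσ u hu v hv
      rw [hS, Finset.mem_filter] at hu
      have hv' : distVal f p v / distVal g q v < ρ := by
        by_contra hc
        push_neg at hc
        exact hv (by rw [hS, Finset.mem_filter]; exact ⟨Finset.mem_univ _, hc⟩)
      have hdens : solDensity f g p q v < solDensity f g p q u := by
        simp only [solDensity]
        exact lt_of_lt_of_le hv' hu.2
      exact hlmsol u v hdens σ hσ
    constructor
    · exact sum_distVal_initial f hdm.f_empty hp S (fun σ hσ =>
        hordered σ (Or.inl (lt_of_le_of_ne (hp.1 σ) (Ne.symm hσ))))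
    · exact sum_distVal_initial g hdm.g_empty hq S (fun σ hσ =>
        hordered σ (Or.inr (lt_of_le_of_ne (hq.1 σ) (Ne.symm hσ))))
  · -- Direction 2: locally maximin allocations come from locally maximin solutions
    intro x y halloc hlm
    obtain ⟨hx, hy⟩ := halloc
    have hd0 : ∀ v, 0 ≤ x v / y v := fun v => div_nonneg (hx.1 v) (hy.1 v)
    obtain ⟨p, hp, hpsupp, hpval⟩ := mem_hull_of_tight f x (fun v => x v / y v)
      hdm.f_empty hx.2.2 hx.2.1 hd0 (fun v0 h => (hlm (x v0 / y v0) h).1)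
    obtain ⟨q, hq, hqsupp, hqval'⟩ := mem_hull_of_tight (fun A => -(g A)) (fun v => -(y v))
      (fun v => x v / y v) (by simp [hdm.g_empty])
      (fun A => by
        have := hy.2.2 A
        show -g A ≤ ∑ v ∈ A, -(y v)
        rw [Finset.sum_neg_distrib]
        linarith)
      (by
        show ∑ v, -(y v) = -g Finset.univ
        rw [Finset.sum_neg_distrib, hy.2.1])
      hd0
      (fun v0 h => by
        have h2 := (hlm (x v0 / y v0) h).2
        rw [Finset.sum_neg_distrib, h2])
    have hqval : ∀ u, ∑ σ, q σ * permVal g σ u = y u := by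
      intro u
      have h2 := hqval' u
      simp only [permVal_neg, mul_neg] at h2
      rw [Finset.sum_neg_distrib] at h2
      linarith
    have hxeq : distVal f p = x := funext hpval
    have hyeq : distVal g q = y := funext hqval
    refine ⟨p, q, hp, hq, ?_, hxeq, hyeq⟩
    intro u v hlt σ hσ
    simp only [solDensity, hxeq, hyeq] at hlt
    rcases hσ with hσ | hσ
    · exact hpsupp σ (ne_of_gt hσ) u v hlt
    · exact hqsupp σ (ne_of_gt hσ) u v hlt
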